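/- The eBH discovery set is contained in the closed eBH discovery set: if R^eBH is the largest self-consistent set of hypotheses with the largest e-values, and R^{c-eBH} is the set R_k of the k largest e-values for the largest k such that R_k ∈ C̄, then R^eBH ⊆ R^{c-eBH}. -/

import Mathlib

open Finset
open scoped Classical

/-- The false discovery proportion `FDP_A(R) = |A ∩ R| / max(|R|, 1)`. -/
noncomputable def FDP {K : ℕ} (A R : Finset (Fin K)) : ℝ :=
  ((A ∩ R).card : ℝ) / max (R.card : ℝ) 1

/-- `k^eBH`: the largest `k ≤ K` such that at least `k` e-values are `≥ K/(αk)`. -/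
noncomputable def kEBH (K : ℕ) (α : ℝ) (E : Fin K → ℝ) : ℕ :=
  sSup {k | k ≤ K ∧ k ≤ (univ.filter (fun i => E i ≥ (K : ℝ) / (α * k))).card}

/-- The eBH discovery set `R^eBH = {i : E_i ≥ K/(α k^eBH)}` (empty if `k^eBH = 0`). -/
noncomputable def ReBH (K : ℕ) (α : ℝ) (E : Fin K → ℝ) : Finset (Fin K) :=
  if kEBH K α E = 0 then ∅
  else univ.filter (fun i => E i ≥ (K : ℝ) / (α * kEBH K α E))

/-- `R_k`: the indices of the `k` largest e-values, given a sorting permutation `σ`. -/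
noncomputable def Rk {K : ℕ} (σ : Fin K ≃ Fin K) (k : ℕ) : Finset (Fin K) :=
  (univ.filter (fun i : Fin K => (i : ℕ) < k)).image σ

/-- Membership in the closed candidate set `C̄`: for every nonempty `A`,
the arithmetic mean e-value `E_A` satisfies `E_A ≥ FDP_A(R)/α`. -/
def Cbar {K : ℕ} (α : ℝ) (E : Fin K → ℝ) (R : Finset (Fin K)) : Prop :=
  ∀ A : Finset (Fin K), A.Nonempty → (∑ i ∈ A, E i) / (A.card : ℝ) ≥ FDP A R / α

/-- `k̄`: the largest `k ≤ K` with `R_k ∈ C̄`; `R^{c-eBH} = R_k̄`. -/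
noncomputable def kCbar (K : ℕ) (α : ℝ) (E : Fin K → ℝ) (σ : Fin K ≃ Fin K) : ℕ :=
  sSup {k | k ≤ K ∧ Cbar α E (Rk σ k)}


lemma card_filter_lt_fin (K n : ℕ) (h : n ≤ K) :
    (univ.filter fun i : Fin K => (i:ℕ) < n).card = n := by
  have : (univ.filter fun i : Fin K => (i:ℕ) < n) = univ.map (Fin.castLEEmb h) := by
    ext i
    simp [Fin.castLEEmb, Fin.castLE]
    constructor
    · intro hi; exact ⟨⟨i, hi⟩, rfl⟩
    · rintro ⟨j, rfl⟩; exact j.isLt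
  rw [this, card_map, card_univ, Fintype.card_fin]

lemma downward_closed_eq {K : ℕ} (D : Finset (Fin K))
    (h : ∀ i j : Fin K, i ≤ j → j ∈ D → i ∈ D) :
    D = univ.filter (fun i : Fin K => (i : ℕ) < D.card) := by
  ext j
  simp only [mem_filter, mem_univ, true_and]
  constructor
  · intro hj
    have hsub : univ.filter (fun i : Fin K => (i:ℕ) < (j:ℕ) + 1) ⊆ D := by
      intro i hi
      simp only [mem_filter, mem_univ, true_and] at hi
      exact h i j (by omega) hj
    have := card_le_card hsub
    rwa [card_filter_lt_fin K ((j:ℕ)+1) j.isLt] at this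
  · intro hj
    by_contra hjD
    have hsub : D ⊆ univ.filter (fun i : Fin K => (i:ℕ) < (j:ℕ)) := by
      intro i hi
      simp only [mem_filter, mem_univ, true_and]
      by_contra hij
      exact hjD (h j i (by omega) hi)
    have := card_le_card hsub
    rw [card_filter_lt_fin K (j:ℕ) (le_of_lt j.isLt)] at this
    omega

/-- the eBH discovery set is contained in the closed eBH discovery set. -/
theorem stmt2 (K : ℕ) (hK : 0 < K) (α : ℝ) (hα : 0 < α) (hα1 : α ≤ 1)
    (E : Fin K → ℝ) (hE : ∀ i, 0 ≤ E i) (σ : Fin K ≃ Fin K)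
    (hσ : ∀ i j : Fin K, i ≤ j → E (σ j) ≤ E (σ i)) :
    ReBH K α E ⊆ Rk σ (kCbar K α E σ) := by
  classical
  set kS := kEBH K α E with hkSdef
  by_cases hk0 : kS = 0
  · intro x hx
    simp [ReBH, ← hkSdef, hk0] at hx
  -- k* ∈ the defining set
  have hkmem : kS ∈ {k | k ≤ K ∧ k ≤ (univ.filter (fun i => E i ≥ (K : ℝ) / (α * k))).card} := by
    rw [hkSdef, kEBH]
    apply Nat.sSup_mem
    · exact ⟨0, by simp⟩
    · exact ⟨K, fun x hx => hx.1⟩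
  obtain ⟨hkK, hkcard⟩ := hkmem
  have hkpos : 0 < kS := Nat.pos_of_ne_zero hk0
  set t : ℝ := (K : ℝ) / (α * kS) with htdef
  have hR : ReBH K α E = univ.filter (fun i => E i ≥ t) := by
    rw [ReBH, ← hkSdef, if_neg hk0]
  set R := univ.filter (fun i => E i ≥ t) with hRdef
  set D := univ.filter (fun j => E (σ j) ≥ t) with hDdef
  have hDcardR : D.card = R.card := by
    rw [hDdef, hRdef]
    apply Finset.card_bij (fun j _ => σ j)
    · intro j hj; simp only [mem_filter, mem_univ, true_and] at hj ⊢; exact hj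
    · intro a _ b _ hab; exact σ.injective hab
    · intro i hi
      simp only [mem_filter, mem_univ, true_and] at hi
      exact ⟨σ.symm i, by simp [hi], by simp⟩
  have hDdc : ∀ i j : Fin K, i ≤ j → j ∈ D → i ∈ D := by
    intro i j hij hj
    simp only [hDdef, mem_filter, mem_univ, true_and] at hj ⊢
    exact le_trans hj (hσ i j hij)
  have hDeq := downward_closed_eq D hDdc
  set m := D.card with hmdef
  have hRkm : Rk σ m = R := by
    rw [Rk, ← hDeq, hDdef, hRdef]
    ext i
    simp only [mem_image, mem_filter, mem_univ, true_and]
    constructor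
    · rintro ⟨j, hj, rfl⟩; exact hj
    · intro hi; exact ⟨σ.symm i, by simp [hi], by simp⟩
  have hmK : m ≤ K := by
    calc m ≤ (univ : Finset (Fin K)).card := card_le_card (subset_univ D)
    _ = K := by simp
  have hkm : kS ≤ m := by rw [hDcardR]; exact hkcard
  have hmpos : 0 < m := lt_of_lt_of_le hkpos hkm
  -- every element of R has E i ≥ K / (α * m)
  have hEm : ∀ i ∈ R, (K : ℝ) / (α * m) ≤ E i := by
    intro i hi
    simp only [hRdef, mem_filter, mem_univ, true_and] at hi
    refine le_trans ?_ hi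
    rw [htdef]
    apply div_le_div_of_nonneg_left (by positivity) (by positivity)
    have : (kS : ℝ) ≤ (m : ℝ) := Nat.cast_le.mpr hkm
    nlinarith
  -- Cbar holds for Rk σ m = R
  have hCbar : Cbar α E (Rk σ m) := by
    intro A hA
    rw [hRkm, FDP]
    have hRcard : R.card = m := hDcardR.symm
    rw [hRcard]
    have hm1 : max (m : ℝ) 1 = (m : ℝ) := by
      apply max_eq_left
      exact_mod_cast hmpos
    rw [hm1]
    have hApos : (0:ℝ) < A.card := by exact_mod_cast hA.card_pos
    rw [ge_iff_le, div_div, div_le_div_iff₀ (mul_pos (Nat.cast_pos.mpr hmpos) hα) hApos]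
    set c : ℝ := ((A ∩ R).card : ℝ) with hcdef
    have hc0 : 0 ≤ c := Nat.cast_nonneg _
    have hsum1 : (A ∩ R).card • ((K:ℝ) / (α * m)) ≤ ∑ i ∈ A ∩ R, E i := by
      apply Finset.card_nsmul_le_sum
      intro i hi
      exact hEm i (mem_of_mem_inter_right hi)
    have hsum2 : ∑ i ∈ A ∩ R, E i ≤ ∑ i ∈ A, E i :=
      Finset.sum_le_sum_of_subset_of_nonneg (inter_subset_left) (fun i _ _ => hE i)
    have hsum : c * ((K:ℝ) / (α * m)) ≤ ∑ i ∈ A, E i := by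
      rw [hcdef]
      calc ((A ∩ R).card : ℝ) * ((K:ℝ) / (α * m))
          = (A ∩ R).card • ((K:ℝ) / (α * m)) := by rw [nsmul_eq_mul]
        _ ≤ ∑ i ∈ A ∩ R, E i := hsum1
        _ ≤ ∑ i ∈ A, E i := hsum2
    have hAK' : A.card ≤ K := by simpa using card_le_card A.subset_univ
    have hAK : (A.card : ℝ) ≤ (K : ℝ) := by exact_mod_cast hAK'
    have hKeq : ((K:ℝ) / (α * m)) * ((m:ℝ) * α) = (K:ℝ) := by
      rw [div_mul_eq_mul_div, mul_comm (m:ℝ) α, mul_div_assoc]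
      rw [div_self (mul_pos hα (Nat.cast_pos.mpr hmpos)).ne', mul_one]
    calc c * (A.card : ℝ) ≤ c * (K : ℝ) := by nlinarith
      _ = c * (((K:ℝ) / (α * m)) * ((m:ℝ) * α)) := by rw [hKeq]
      _ = (c * ((K:ℝ) / (α * m))) * ((m:ℝ) * α) := by ring
      _ ≤ (∑ i ∈ A, E i) * ((m:ℝ) * α) :=
          mul_le_mul_of_nonneg_right hsum (mul_pos (Nat.cast_pos.mpr hmpos) hα).le
  -- m ≤ kCbar
  have hmle : m ≤ kCbar K α E σ := by
    rw [kCbar]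
    apply le_csSup
    · exact ⟨K, fun x hx => hx.1⟩
    · exact ⟨hmK, hCbar⟩
  -- conclude
  rw [hR, ← hRkm]
  rw [Rk, Rk]
  apply image_subset_image
  intro i hi
  simp only [mem_filter, mem_univ, true_and] at hi ⊢
  omega
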